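/- Let (Ω, ℱ, ℙ) be a probability space, α ∈ (0,1), and Θ ⊆ ℝ an open interval. Let L : Θ × Ω → ℝ with L(θ,·) measurable for each θ and L(θ₀,·) integrable for some θ₀ ∈ Θ. Assume: (i) there is an integrable K : Ω → [0,∞) such that for ℙ-a.e. ω, |L(θ₂,ω) − L(θ₁,ω)| ≤ K(ω)·|θ₂ − θ₁| for all θ₁, θ₂ ∈ Θ; (ii) for ℙ-a.e. ω, θ ↦ L(θ,ω) is differentiable on Θ with derivative L′(θ,ω); (iii) v : Θ → ℝ is differentiable on Θ; (iv) for every θ ∈ Θ, ℙ(L(θ,·) = v(θ)) = 0 and ℙ(L(θ,·) ≤ v(θ)) = α. Define c(θ) = v(θ) + (1/(1−α))·𝔼[(L(θ,·) − v(θ))⁺]. Then c is differentiable on Θ and for every θ ∈ Θ, c′(θ) = (1/(1−α))·𝔼[L′(θ,·)·1{L(θ,·) > v(θ)}]. -/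

import Mathlib

open MeasureTheory Filter Topology

/-- IPA formula for the CVaR sensitivity (interchange of expectation and
differentiation): under an a.s. Lipschitz condition with integrable modulus,
a.s. differentiability of `θ ↦ L(θ,·)`, differentiability of the VaR function
`v`, the no-atom condition `ℙ(L(θ) = v(θ)) = 0` and `ℙ(L(θ) ≤ v(θ)) = α`,
the CVaR `c(θ) = v(θ) + (1/(1−α))·𝔼[(L(θ) − v(θ))⁺]` is differentiable on `Θ`
with `c′(θ) = (1/(1−α))·𝔼[L′(θ)·1{L(θ) > v(θ)}]`. -/
theorem stmt_14 {Ω : Type*} [MeasurableSpace Ω] (μ : Measure Ω) [IsProbabilityMeasure μ]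
    (α : ℝ) (hα : α ∈ Set.Ioo (0:ℝ) 1)
    (Θ : Set ℝ) (hΘopen : IsOpen Θ) (hΘconn : Θ.OrdConnected)
    (L L' : ℝ → Ω → ℝ)
    (hmeas : ∀ θ ∈ Θ, Measurable (L θ))
    (θ₀ : ℝ) (hθ₀ : θ₀ ∈ Θ) (hint : Integrable (L θ₀) μ)
    (K : Ω → ℝ) (hK0 : ∀ ω, 0 ≤ K ω) (hKint : Integrable K μ)
    (hlip : ∀ᵐ ω ∂μ, ∀ θ₁ ∈ Θ, ∀ θ₂ ∈ Θ, |L θ₂ ω - L θ₁ ω| ≤ K ω * |θ₂ - θ₁|)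
    (hdiff : ∀ᵐ ω ∂μ, ∀ θ ∈ Θ, HasDerivAt (fun t => L t ω) (L' θ ω) θ)
    (v : ℝ → ℝ) (hv : ∀ θ ∈ Θ, DifferentiableAt ℝ v θ)
    (hatom : ∀ θ ∈ Θ, μ {ω | L θ ω = v θ} = 0)
    (hquant : ∀ θ ∈ Θ, (μ {ω | L θ ω ≤ v θ}).toReal = α)
    (c : ℝ → ℝ)
    (hc : ∀ θ ∈ Θ, c θ = v θ + (1 / (1 - α)) * ∫ ω, max (L θ ω - v θ) 0 ∂μ) :
    ∀ θ ∈ Θ, HasDerivAt c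
      ((1 / (1 - α)) * ∫ ω, L' θ ω * (if v θ < L θ ω then (1:ℝ) else 0) ∂μ) θ := by
  obtain ⟨hα0, hα1⟩ := hα
  have h1α : (1:ℝ) - α ≠ 0 := by linarith
  -- integrability of L x for all x ∈ Θ
  have hLint : ∀ x ∈ Θ, Integrable (L x) μ := by
    intro x hx
    have hdiffint : Integrable (fun ω => L x ω - L θ₀ ω) μ := by
      refine Integrable.mono' (hKint.mul_const |x - θ₀|) ?_ ?_
      · exact ((hmeas x hx).sub (hmeas θ₀ hθ₀)).aestronglyMeasurable
      · filter_upwards [hlip] with ω hω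
        simpa [Real.norm_eq_abs] using hω θ₀ hθ₀ x hx
    exact (hint.add hdiffint).congr (Eventually.of_forall fun ω => by
      simp only [Pi.add_apply]; ring)
  -- integrability of the positive part
  have hgint : ∀ x ∈ Θ, Integrable (fun ω => max (L x ω - v x) 0) μ := fun x hx =>
    ((hLint x hx).sub (integrable_const (v x))).pos_part
  intro θ hθ
  obtain ⟨ε, εpos, hball⟩ := Metric.isOpen_iff.1 hΘopen θ hθ
  have hvθ : HasDerivAt v (deriv v θ) θ := (hv θ hθ).hasDerivAt
  have hmem : ∀ᶠ x in 𝓝[≠] θ, x ∈ Θ :=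
    ((hΘopen.eventually_mem hθ).filter_mono nhdsWithin_le_nhds)
  -- a.e. strong measurability of L' θ
  have hL'meas : AEStronglyMeasurable (L' θ) μ := by
    set u : ℕ → ℝ := fun n => θ + (ε/2) * (1/((n:ℝ)+1)) with hu
    have hpos : ∀ n : ℕ, (0:ℝ) < (ε/2) * (1/((n:ℝ)+1)) := by intro n; positivity
    have hu_mem : ∀ n, u n ∈ Θ := by
      intro n
      apply hball
      simp only [Metric.mem_ball, Real.dist_eq, hu, add_sub_cancel_left]
      rw [abs_of_pos (hpos n)]
      have h2 : 1/((n:ℝ)+1) ≤ 1 := by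
        rw [div_le_one (by positivity)]
        have := Nat.cast_nonneg (α := ℝ) n
        linarith
      nlinarith
    have hu_ne : ∀ n, u n ≠ θ := by
      intro n
      have := hpos n
      simp only [hu]
      intro h
      nlinarith [hpos n, (by linarith [hpos n] : (ε/2) * (1/((n:ℝ)+1)) ≠ 0)]
    have hu_t : Tendsto u atTop (𝓝[≠] θ) := by
      rw [tendsto_nhdsWithin_iff]
      constructor
      · have h0 : Tendsto (fun n : ℕ => 1/((n:ℝ)+1)) atTop (𝓝 0) :=
          tendsto_one_div_add_atTop_nhds_zero_nat
        have := (h0.const_mul (ε/2)).const_add θ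
        simpa [hu] using this
      · exact Eventually.of_forall fun n => hu_ne n
    have hmeasn : ∀ n, AEStronglyMeasurable (fun ω => (L (u n) ω - L θ ω) / (u n - θ)) μ :=
      fun n => (((hmeas (u n) (hu_mem n)).sub (hmeas θ hθ)).div_const _).aestronglyMeasurable
    apply aestronglyMeasurable_of_tendsto_ae atTop hmeasn
    filter_upwards [hdiff] with ω hω
    have h := (hasDerivAt_iff_tendsto_slope.1 (hω θ hθ)).comp hu_t
    refine h.congr fun n => ?_
    simp [Function.comp, slope_def_field]
  -- a.e. bound on |L' θ|
  have hL'bd : ∀ᵐ ω ∂μ, |L' θ ω| ≤ K ω := by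
    filter_upwards [hdiff, hlip] with ω hω hlipω
    have h := (hasDerivAt_iff_tendsto_slope.1 (hω θ hθ)).abs
    refine le_of_tendsto h ?_
    filter_upwards [hmem, self_mem_nhdsWithin] with x hx hx'
    have ht : (0:ℝ) < |x - θ| := abs_pos.2 (sub_ne_zero.2 hx')
    rw [slope_def_field, abs_div, div_le_iff₀ ht]
    exact hlipω θ hθ x hx
  -- indicator function facts
  set ind : Ω → ℝ := fun ω => if v θ < L θ ω then (1:ℝ) else 0 with hind_def
  have hindmeas : Measurable ind :=
    Measurable.ite (measurableSet_lt measurable_const (hmeas θ hθ)) measurable_const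
      measurable_const
  have hindle : ∀ ω, |ind ω| ≤ 1 := by
    intro ω; simp only [hind_def]; split <;> simp
  have hindint : Integrable ind μ := by
    refine Integrable.mono' (integrable_const (1:ℝ)) hindmeas.aestronglyMeasurable ?_
    exact Eventually.of_forall fun ω => by simpa [Real.norm_eq_abs] using hindle ω
  have hI1 : Integrable (fun ω => L' θ ω * ind ω) μ := by
    refine Integrable.mono' hKint (hL'meas.mul hindmeas.aestronglyMeasurable) ?_
    filter_upwards [hL'bd] with ω hω
    rw [Real.norm_eq_abs, abs_mul]
    calc |L' θ ω| * |ind ω| ≤ |L' θ ω| * 1 :=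
          mul_le_mul_of_nonneg_left (hindle ω) (abs_nonneg _)
      _ = |L' θ ω| := mul_one _
      _ ≤ K ω := hω
  have hI2 : Integrable (fun ω => deriv v θ * ind ω) μ := hindint.const_mul _
  -- ∫ ind = 1 - α
  have hindint_eq : ∫ ω, ind ω ∂μ = 1 - α := by
    have hseq : ind = Set.indicator {ω | v θ < L θ ω} (fun _ => (1:ℝ)) := by
      funext ω
      simp only [hind_def, Set.indicator_apply, Set.mem_setOf_eq]
    have hs : MeasurableSet {ω | v θ < L θ ω} :=
      measurableSet_lt measurable_const (hmeas θ hθ)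
    rw [hseq, integral_indicator_const _ hs, smul_eq_mul, mul_one]
    have hcompl : {ω | v θ < L θ ω} = {ω | L θ ω ≤ v θ}ᶜ := by
      ext ω; simp [not_le]
    have hsle : MeasurableSet {ω | L θ ω ≤ v θ} :=
      measurableSet_le (hmeas θ hθ) measurable_const
    rw [hcompl, measureReal_def, measure_compl hsle (measure_ne_top μ _), measure_univ,
      ENNReal.toReal_sub_of_le prob_le_one ENNReal.one_ne_top, ENNReal.toReal_one,
      hquant θ hθ]
  -- the function D
  set D : Ω → ℝ := fun ω => L' θ ω * ind ω - deriv v θ * ind ω with hD_def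
  have hDint : ∫ ω, D ω ∂μ = (∫ ω, L' θ ω * ind ω ∂μ) - deriv v θ * (1 - α) := by
    rw [hD_def]
    rw [integral_sub hI1 hI2, integral_const_mul, hindint_eq]
  -- a.e. no atom
  have hne : ∀ᵐ ω ∂μ, L θ ω ≠ v θ := by
    rw [ae_iff]
    simpa using hatom θ hθ
  -- the key derivative of the positive-part integral
  have hφ : HasDerivAt (fun x => ∫ ω, max (L x ω - v x) 0 ∂μ) (∫ ω, D ω ∂μ) θ := by
    rw [hasDerivAt_iff_tendsto_slope]
    set M : ℝ := |deriv v θ| + 1 with hM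
    have hvev : ∀ᶠ x in 𝓝[≠] θ, |v x - v θ| ≤ M * |x - θ| := by
      have h1 : Tendsto (fun x => |slope v θ x|) (𝓝[≠] θ) (𝓝 |deriv v θ|) :=
        (hasDerivAt_iff_tendsto_slope.1 hvθ).abs
      have h2 : ∀ᶠ x in 𝓝[≠] θ, |slope v θ x| ≤ M :=
        (h1.eventually_lt_const (by simp only [hM]; linarith)).mono fun x hx => hx.le
      filter_upwards [h2, self_mem_nhdsWithin] with x hx hx'
      have hxθ : x - θ ≠ 0 := sub_ne_zero.2 hx'
      have heq : |v x - v θ| = |slope v θ x| * |x - θ| := by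
        rw [slope_def_field, abs_div]
        field_simp
      rw [heq]
      exact mul_le_mul_of_nonneg_right hx (abs_nonneg _)
    have key := tendsto_integral_filter_of_dominated_convergence
      (μ := μ) (l := 𝓝[≠] θ)
      (F := fun x ω => (x - θ)⁻¹ * (max (L x ω - v x) 0 - max (L θ ω - v θ) 0))
      (f := D) (fun ω => K ω + M)
      (by
        filter_upwards [hmem] with x hx
        exact (((((hmeas x hx).sub measurable_const).max measurable_const).sub
          (((hmeas θ hθ).sub measurable_const).max measurable_const)).const_mul
          _).aestronglyMeasurable)
      (by
        filter_upwards [hmem, hvev, self_mem_nhdsWithin] with x hxΘ hxv hxne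
        filter_upwards [hlip] with ω hω
        have ht : (0:ℝ) < |x - θ| := abs_pos.2 (sub_ne_zero.2 hxne)
        have h1 : |max (L x ω - v x) 0 - max (L θ ω - v θ) 0|
            ≤ |(L x ω - v x) - (L θ ω - v θ)| := abs_max_sub_max_le_abs _ _ _
        have h2 : |(L x ω - v x) - (L θ ω - v θ)| ≤ K ω * |x - θ| + M * |x - θ| := by
          have hlx := hω θ hθ x hxΘ
          calc |(L x ω - v x) - (L θ ω - v θ)|
              = |(L x ω - L θ ω) - (v x - v θ)| := by ring_nf
            _ ≤ |L x ω - L θ ω| + |v x - v θ| := abs_sub _ _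
            _ ≤ K ω * |x - θ| + M * |x - θ| := add_le_add hlx hxv
        calc ‖(x - θ)⁻¹ * (max (L x ω - v x) 0 - max (L θ ω - v θ) 0)‖
            = |x - θ|⁻¹ * |max (L x ω - v x) 0 - max (L θ ω - v θ) 0| := by
              rw [Real.norm_eq_abs, abs_mul, abs_inv]
          _ ≤ |x - θ|⁻¹ * (K ω * |x - θ| + M * |x - θ|) :=
              mul_le_mul_of_nonneg_left (h1.trans h2) (by positivity)
          _ = K ω + M := by field_simp)
      (hKint.add (integrable_const M))
      (by
        filter_upwards [hdiff, hne] with ω hω hωne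
        have hdL : HasDerivAt (fun t => L t ω) (L' θ ω) θ := hω θ hθ
        have hcont : Tendsto (fun t => L t ω - v t) (𝓝 θ)
            (𝓝 (L θ ω - v θ)) := (hdL.continuousAt.sub hvθ.continuousAt)
        have hslope : ∀ f : ℝ → ℝ, ∀ x : ℝ, slope f θ x = (x - θ)⁻¹ * (f x - f θ) := by
          intro f x
          rw [slope_def_field]
          rw [div_eq_inv_mul]
        rcases lt_or_gt_of_ne hωne with hlt | hgt
        · -- L θ ω < v θ, indicator is 0
          have hev : ∀ᶠ x in 𝓝 θ, L x ω - v x < 0 :=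
            hcont.eventually_lt_const (by linarith)
          have hev0 : (fun x => max (L x ω - v x) 0) =ᶠ[𝓝 θ] fun _ => (0:ℝ) := by
            filter_upwards [hev] with x hx
            simp [max_eq_right hx.le]
          have hder : HasDerivAt (fun x => max (L x ω - v x) 0) 0 θ :=
            (hasDerivAt_const θ (0:ℝ)).congr_of_eventuallyEq hev0
          have h := hasDerivAt_iff_tendsto_slope.1 hder
          have hDval : D ω = 0 := by
            simp [hD_def, hind_def, if_neg (not_lt.2 hlt.le)]
          rw [hDval]
          refine h.congr fun x => ?_
          exact hslope _ x
        · -- v θ < L θ ω, indicator is 1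
          have hev : ∀ᶠ x in 𝓝 θ, 0 < L x ω - v x :=
            hcont.eventually_const_lt (by linarith)
          have hev0 : (fun x => max (L x ω - v x) 0) =ᶠ[𝓝 θ] fun x => L x ω - v x := by
            filter_upwards [hev] with x hx
            simp [max_eq_left hx.le]
          have hder : HasDerivAt (fun x => max (L x ω - v x) 0)
              (L' θ ω - deriv v θ) θ :=
            (hdL.sub hvθ).congr_of_eventuallyEq hev0
          have h := hasDerivAt_iff_tendsto_slope.1 hder
          have hDval : D ω = L' θ ω - deriv v θ := by
            simp [hD_def, hind_def, if_pos hgt]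
          rw [hDval]
          refine h.congr fun x => ?_
          exact hslope _ x)
    refine key.congr' ?_
    filter_upwards [hmem] with x hx
    rw [slope_def_field, div_eq_inv_mul]
    rw [← integral_sub (hgint x hx) (hgint θ hθ), ← integral_const_mul]
  -- assemble
  have hceq : c =ᶠ[𝓝 θ] fun x => v x + (1 / (1 - α)) * ∫ ω, max (L x ω - v x) 0 ∂μ := by
    filter_upwards [hΘopen.eventually_mem hθ] with x hx using hc x hx
  have hfin : HasDerivAt (fun x => v x + (1 / (1 - α)) * ∫ ω, max (L x ω - v x) 0 ∂μ)
      (deriv v θ + (1 / (1 - α)) * ∫ ω, D ω ∂μ) θ := hvθ.add (hφ.const_mul _)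
  have hres := hfin.congr_of_eventuallyEq hceq
  refine HasDerivAt.congr_deriv hres ?_
  rw [hDint]
  have hII : (∫ ω, L' θ ω * (if v θ < L θ ω then (1:ℝ) else 0) ∂μ)
      = ∫ ω, L' θ ω * ind ω ∂μ := rfl
  rw [hII]
  generalize (∫ ω, L' θ ω * ind ω ∂μ) = J
  field_simp
  ring
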